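/- Block diagonalization of multi-channel circulant covariance: for z̄ ∈ ℂ^{C×n}, circ(z̄)·circ(z̄)* = (I_C ⊗ Fₙ*) · P · D(z̄) · P* · (I_C ⊗ Fₙ), where D(z̄) is block diagonal with p-th C×C block equal to v(p)v(p)* for v(p) = DFT(z̄)(p) ∈ ℂ^C (the vector of p-th DFT coefficients over the channels), P is a suitable permutation matrix, and Fₙ is the unitary DFT matrix. -/

import Mathlib

open Matrix BigOperators Kronecker

/-- The normalized DFT matrix, `(Fₙ)_{p,t} = exp(-2πi p t / n) / √n`. -/
noncomputable def dftMatrix (n : ℕ) : Matrix (ZMod n) (ZMod n) ℂ :=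
  Matrix.of fun p t =>
    Complex.exp (-2 * Real.pi * Complex.I * (p.val : ℂ) * (t.val : ℂ) / (n : ℂ)) /
      (Real.sqrt n : ℂ)

/-- The `nC × n` vertical stack of the circulant matrices of the channels of a
multi-channel signal `z̄ : Fin C → ZMod n → ℂ`. -/
def circStack {C n : ℕ} (z : Fin C → ZMod n → ℂ) :
    Matrix (Fin C × ZMod n) (ZMod n) ℂ :=
  Matrix.of fun ci j => z ci.1 (ci.2 - j)

/-- The permutation matrix reordering indices from (channel, frequency) to
(frequency, channel). -/
def permCF (C n : ℕ) : Matrix (Fin C × ZMod n) (ZMod n × Fin C) ℂ :=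
  Matrix.of fun ci pc => if ci.1 = pc.2 ∧ ci.2 = pc.1 then 1 else 0

/-- The DFT coefficients of each channel: `v(p)(c) = ∑ t, z̄[c](t) ω^{p t}`. -/
noncomputable def dftCoeff {C n : ℕ} [NeZero n] (z : Fin C → ZMod n → ℂ)
    (p : ZMod n) (c : Fin C) : ℂ :=
  ∑ t : ZMod n,
    z c t * Complex.exp (-2 * Real.pi * Complex.I * (p.val : ℂ) * (t.val : ℂ) / (n : ℂ))

-- helpers
lemma exp_eq_stdAddChar {n : ℕ} [NeZero n] (p t : ZMod n) :
    Complex.exp (-2 * Real.pi * Complex.I * (p.val : ℂ) * (t.val : ℂ) / (n : ℂ)) =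
      ZMod.stdAddChar (-(p * t)) := by
  have : (-(p*t) : ZMod n) = ((-(p.val * t.val : ℕ) : ℤ) : ZMod n) := by
    push_cast; simp [ZMod.natCast_val, ZMod.cast_id]
  rw [this, ZMod.stdAddChar_coe]
  congr 1
  push_cast
  ring

lemma conj_stdAddChar {n : ℕ} [NeZero n] (a : ZMod n) :
    (starRingEnd ℂ) (ZMod.stdAddChar a) = ZMod.stdAddChar (-a) := by
  rw [AddChar.map_neg_eq_inv, Complex.inv_eq_conj]
  rw [ZMod.stdAddChar_apply]
  exact Circle.norm_coe _

lemma sum_stdAddChar_mul {n : ℕ} [NeZero n] (b : ZMod n) :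
    ∑ x : ZMod n, ZMod.stdAddChar (x * b) = if b = 0 then (n : ℂ) else 0 := by
  rw [AddChar.sum_mulShift b (ZMod.isPrimitive_stdAddChar n)]
  simp [ZMod.card]

/-- Block diagonalization of the multi-channel circulant covariance:
`circ(z̄) circ(z̄)* = (I_C ⊗ Fₙ*) P D(z̄) P* (I_C ⊗ Fₙ)`, where the `p`-th `C × C`
diagonal block of `D(z̄)` is `v(p) v(p)*` for the vector `v(p)` of `p`-th DFT
coefficients over the channels. -/
theorem multichannel_cov_block_diag {C n : ℕ} [NeZero n] (z : Fin C → ZMod n → ℂ) :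
    circStack z * (circStack z)ᴴ =
      ((1 : Matrix (Fin C) (Fin C) ℂ) ⊗ₖ (dftMatrix n)ᴴ) * permCF C n *
        (Matrix.of fun pc pc' : ZMod n × Fin C =>
          if pc.1 = pc'.1 then
            dftCoeff z pc.1 pc.2 * (starRingEnd ℂ) (dftCoeff z pc'.1 pc'.2)
          else 0) *
        (permCF C n)ᴴ * ((1 : Matrix (Fin C) (Fin C) ℂ) ⊗ₖ dftMatrix n) := by
  ext ⟨c, i⟩ ⟨c', j⟩
  simp only [Matrix.mul_apply, circStack, permCF, conjTranspose_apply, kroneckerMap_apply,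
    Matrix.one_apply, Matrix.of_apply, Fintype.sum_prod_type, ite_mul, mul_ite, zero_mul,
    mul_zero, one_mul, mul_one, ite_and, apply_ite star, star_one, star_zero, Finset.sum_ite_eq,
    Finset.sum_ite_eq', Finset.mem_univ, if_true, Finset.sum_ite_irrel, Finset.sum_const_zero]
  have hn : (n:ℂ) ≠ 0 := Nat.cast_ne_zero.mpr (NeZero.ne n)
  have hs : ((Real.sqrt n : ℝ) : ℂ) ≠ 0 := by
    simp only [ne_eq, Complex.ofReal_eq_zero]
    exact Real.sqrt_ne_zero'.mpr (by exact_mod_cast Nat.pos_of_ne_zero (NeZero.ne n))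
  have hsq : ((Real.sqrt n : ℝ) : ℂ) * ((Real.sqrt n : ℝ) : ℂ) = (n:ℂ) := by
    rw [← Complex.ofReal_mul, Real.mul_self_sqrt (Nat.cast_nonneg n)]
    norm_cast
  have hterm : ∀ x : ZMod n,
      star (dftMatrix n x i) * (dftCoeff z x c * (starRingEnd ℂ) (dftCoeff z x c')) *
        dftMatrix n x j =
      (∑ t : ZMod n, ∑ s : ZMod n,
        z c t * (starRingEnd ℂ) (z c' s) * ZMod.stdAddChar (x * (i - t + s - j))) / n := by
    intro x
    simp only [dftMatrix, dftCoeff, Matrix.of_apply, exp_eq_stdAddChar, Complex.star_def,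
      map_div₀, _root_.map_mul, map_sum, conj_stdAddChar, Complex.conj_ofReal, neg_neg]
    rw [Finset.sum_mul_sum]
    simp only [Finset.sum_mul, Finset.mul_sum, Finset.sum_div]
    refine Finset.sum_congr rfl fun t _ => Finset.sum_congr rfl fun s _ => ?_
    have hcomb : (ZMod.stdAddChar (x * (i - t + s - j)) : ℂ) =
        ZMod.stdAddChar (x*i) * ZMod.stdAddChar (-(x*t)) * ZMod.stdAddChar (x*s) *
          ZMod.stdAddChar (-(x*j)) := by
      rw [← AddChar.map_add_eq_mul, ← AddChar.map_add_eq_mul, ← AddChar.map_add_eq_mul]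
      congr 1
      ring
    rw [hcomb]
    field_simp
    rw [sq, hsq]
    ring
  simp_rw [hterm, Finset.sum_div]
  rw [Finset.sum_comm]
  have hinner : ∀ t : ZMod n,
      ∑ x : ZMod n, ∑ s : ZMod n,
        z c t * (starRingEnd ℂ) (z c' s) * ZMod.stdAddChar (x * (i - t + s - j)) / n
      = z c t * (starRingEnd ℂ) (z c' (t + j - i)) := by
    intro t
    simp only [← Finset.sum_div]
    rw [Finset.sum_comm]
    have : ∀ s : ZMod n,
        ∑ x : ZMod n, z c t * (starRingEnd ℂ) (z c' s) * ZMod.stdAddChar (x * (i - t + s - j))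
        = z c t * (starRingEnd ℂ) (z c' s) * (if i - t + s - j = 0 then (n:ℂ) else 0) := by
      intro s
      rw [← Finset.mul_sum, sum_stdAddChar_mul]
    simp_rw [this]
    have hiff : ∀ s : ZMod n, (i - t + s - j = 0) ↔ (s = t + j - i) := by
      intro s
      constructor <;> intro h <;> linear_combination h
    simp_rw [hiff]
    simp only [mul_ite, mul_zero, Finset.sum_ite_eq', Finset.mem_univ, if_true]
    rw [mul_div_assoc, div_self hn, mul_one]
  simp_rw [hinner]
  -- LHS reindex: k = i - t
  rw [← Equiv.sum_comp (Equiv.subLeft i) (fun k => z c (i - k) * star (z c' (j - k)))]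
  refine Finset.sum_congr rfl fun t _ => ?_
  simp only [Equiv.subLeft_apply, sub_sub_cancel]
  congr 2
  ring
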